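/- There exists a constant C > 0 such that for all t ≥ 0: ∫₀ᵗ log²(2+s)/((1+s)^{3/2}·√(1+t−s)) ds ≤ C/√(1+t). -/

import Mathlib

open Real intervalIntegral

lemma two_rpow_eighth_le : (2:ℝ) ^ ((1:ℝ)/8) ≤ 9/8 := by
  have h : ((2:ℝ) ^ ((1:ℝ)/8)) ^ (8:ℕ) ≤ ((9:ℝ)/8) ^ (8:ℕ) := by
    rw [← Real.rpow_natCast ((2:ℝ) ^ ((1:ℝ)/8)) 8, ← Real.rpow_mul (by norm_num)]
    norm_num
  exact le_of_pow_le_pow_left₀ (by norm_num) (by norm_num) h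

lemma logsq_bound (s : ℝ) (hs : 0 ≤ s) :
    Real.log (2+s) ^ 2 ≤ 81 * (1+s) ^ ((1:ℝ)/4) := by
  have h1 : Real.log (2+s) ≤ 9 * (1+s) ^ ((1:ℝ)/8) := by
    have h2 : Real.log (2+s) ≤ (2+s) ^ ((1:ℝ)/8) / ((1:ℝ)/8) :=
      Real.log_le_rpow_div (by linarith) (by norm_num)
    have h3 : (2+s) ^ ((1:ℝ)/8) ≤ (2*(1+s)) ^ ((1:ℝ)/8) :=
      Real.rpow_le_rpow (by linarith) (by linarith) (by norm_num)
    have h4 : (2*(1+s)) ^ ((1:ℝ)/8) = 2 ^ ((1:ℝ)/8) * (1+s) ^ ((1:ℝ)/8) :=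
      Real.mul_rpow (by norm_num) (by linarith)
    have h5 : (2:ℝ) ^ ((1:ℝ)/8) ≤ 9/8 := two_rpow_eighth_le
    have h6 : (0:ℝ) ≤ (1+s) ^ ((1:ℝ)/8) := Real.rpow_nonneg (by linarith) _
    calc Real.log (2+s) ≤ (2+s) ^ ((1:ℝ)/8) / ((1:ℝ)/8) := h2
      _ = 8 * (2+s) ^ ((1:ℝ)/8) := by ring
      _ ≤ 8 * (2 ^ ((1:ℝ)/8) * (1+s) ^ ((1:ℝ)/8)) := by rw [← h4]; nlinarith
      _ ≤ 9 * (1+s) ^ ((1:ℝ)/8) := by nlinarith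
  have hnn : 0 ≤ Real.log (2+s) := Real.log_nonneg (by linarith)
  have h7 : Real.log (2+s) ^ 2 ≤ (9 * (1+s) ^ ((1:ℝ)/8)) ^ 2 := by nlinarith
  have h8 : ((1+s) ^ ((1:ℝ)/8)) ^ 2 = (1+s) ^ ((1:ℝ)/4) := by
    rw [← Real.rpow_natCast ((1+s) ^ ((1:ℝ)/8)) 2, ← Real.rpow_mul (by linarith)]
    norm_num
  nlinarith [Real.rpow_nonneg (show (0:ℝ) ≤ 1+s by linarith) ((1:ℝ)/8)]

set_option maxHeartbeats 1000000 in
theorem conv_est' (t : ℝ) (ht : 0 ≤ t) :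
      (∫ s in (0:ℝ)..t,
          (Real.log (2 + s)) ^ 2 / ((1 + s) ^ ((3 : ℝ) / 2) * Real.sqrt (1 + t - s))) ≤
        (2048:ℝ) / Real.sqrt (1 + t) := by
  have h1t : (0:ℝ) < 1 + t := by linarith
  have hst : (0:ℝ) < Real.sqrt (1+t) := Real.sqrt_pos.mpr h1t
  set f : ℝ → ℝ := fun s => (Real.log (2 + s)) ^ 2 / ((1 + s) ^ ((3 : ℝ) / 2) * Real.sqrt (1 + t - s)) with hf
  set g1 : ℝ → ℝ := fun s => 162 * (1+s) ^ (-(5:ℝ)/4) / Real.sqrt (1+t) with hg1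
  set g2 : ℝ → ℝ := fun s => 243 * (1+t) ^ (-(5:ℝ)/4) * (1+t-s) ^ (-(1:ℝ)/2) with hg2
  have hfi : IntervalIntegrable f MeasureTheory.volume 0 t := by
    apply ContinuousOn.intervalIntegrable
    rw [Set.uIcc_of_le ht]
    apply ContinuousOn.div
    · apply ContinuousOn.pow
      apply Real.continuousOn_log.comp (by fun_prop)
      intro x hx
      simp only [Set.mem_compl_iff, Set.mem_singleton_iff]
      have := (Set.mem_Icc.mp hx).1
      intro h; linarith [show (2:ℝ)+x = 0 from h]
    · apply ContinuousOn.mul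
      · exact ContinuousOn.rpow_const (by fun_prop) (fun x hx => Or.inr (by norm_num))
      · exact (Real.continuous_sqrt.comp (by fun_prop)).continuousOn
    · intro x hx
      obtain ⟨hx0, hxt⟩ := Set.mem_Icc.mp hx
      exact mul_ne_zero (Real.rpow_pos_of_pos (by linarith) _).ne'
        (Real.sqrt_pos.mpr (by linarith)).ne'
  have hg1i : IntervalIntegrable g1 MeasureTheory.volume 0 t := by
    apply ContinuousOn.intervalIntegrable
    rw [Set.uIcc_of_le ht]
    apply ContinuousOn.div_const
    apply ContinuousOn.mul continuousOn_const
    exact ContinuousOn.rpow_const (by fun_prop)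
      (fun x hx => Or.inl (by have := (Set.mem_Icc.mp hx).1; intro h; linarith [show (1:ℝ)+x = 0 from h]))
  have hg2i : IntervalIntegrable g2 MeasureTheory.volume 0 t := by
    apply ContinuousOn.intervalIntegrable
    rw [Set.uIcc_of_le ht]
    apply ContinuousOn.mul continuousOn_const
    exact ContinuousOn.rpow_const (by fun_prop)
      (fun x hx => Or.inl (by have := (Set.mem_Icc.mp hx).2; intro h; linarith [show (1:ℝ)+t-x = 0 from h]))
  have hpt : ∀ s ∈ Set.Icc (0:ℝ) t, f s ≤ g1 s + g2 s := by
    intro s hs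
    obtain ⟨hs0, hst'⟩ := Set.mem_Icc.mp hs
    have h1s : (0:ℝ) < 1 + s := by linarith
    have hts1 : (1:ℝ) ≤ 1 + t - s := by linarith
    have hLsq := logsq_bound s hs0
    have hg1nn : 0 ≤ g1 s := by
      simp only [hg1]
      positivity
    have hg2nn : 0 ≤ g2 s := by
      simp only [hg2]
      have := Real.rpow_nonneg (show (0:ℝ) ≤ 1+t-s by linarith) (-(1:ℝ)/2)
      have := Real.rpow_nonneg h1t.le (-(5:ℝ)/4)
      positivity
    rcases le_or_gt s (t/2) with hhalf | hhalf
    · -- s ≤ t/2 : f s ≤ g1 s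
      have hsq : Real.sqrt (1+t) / 2 ≤ Real.sqrt (1+t-s) := by
        have e : Real.sqrt ((1+t) * (1/2)^2) = Real.sqrt (1+t) * (1/2) := by
          rw [Real.sqrt_mul h1t.le, Real.sqrt_sq (by norm_num)]
        calc Real.sqrt (1+t) / 2 = Real.sqrt ((1+t) * (1/2)^2) := by rw [e]; ring
          _ ≤ Real.sqrt (1+t-s) := Real.sqrt_le_sqrt (by nlinarith)
      have hden : 0 < (1+s) ^ ((3:ℝ)/2) * (Real.sqrt (1+t) / 2) := by positivity
      have hstep : f s ≤ 81 * (1+s)^((1:ℝ)/4) / ((1+s) ^ ((3:ℝ)/2) * (Real.sqrt (1+t)/2)) := by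
        apply div_le_div₀ (by positivity) hLsq hden
        exact mul_le_mul_of_nonneg_left hsq (Real.rpow_nonneg h1s.le _)
      have heq : 81 * (1+s)^((1:ℝ)/4) / ((1+s) ^ ((3:ℝ)/2) * (Real.sqrt (1+t)/2)) = g1 s := by
        simp only [hg1]
        have e : (1+s)^(-(5:ℝ)/4) = (1+s)^((1:ℝ)/4) / (1+s)^((3:ℝ)/2) := by
          rw [← Real.rpow_sub h1s]; norm_num
        rw [e]
        field_simp
        ring
      calc f s ≤ 81 * (1+s)^((1:ℝ)/4) / ((1+s) ^ ((3:ℝ)/2) * (Real.sqrt (1+t)/2)) := hstep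
        _ = g1 s := heq
        _ ≤ g1 s + g2 s := le_add_of_nonneg_right hg2nn
    · -- s > t/2 : f s ≤ g2 s
      have h1s' : (1+t)/2 ≤ 1+s := by linarith
      have hpow : (1+t)^((3:ℝ)/2)/3 ≤ (1+s)^((3:ℝ)/2) := by
        have a1 : ((1+t)/2)^((3:ℝ)/2) ≤ (1+s)^((3:ℝ)/2) :=
          Real.rpow_le_rpow (by positivity) h1s' (by norm_num)
        have a2 : ((1+t)/2)^((3:ℝ)/2) = (1+t)^((3:ℝ)/2) / 2^((3:ℝ)/2) :=
          Real.div_rpow h1t.le (by norm_num : (0:ℝ) ≤ 2) _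
        have a3 : (2:ℝ)^((3:ℝ)/2) ≤ 3 := by
          have h : ((2:ℝ)^((3:ℝ)/2))^(2:ℕ) ≤ (3:ℝ)^(2:ℕ) := by
            rw [← Real.rpow_natCast ((2:ℝ)^((3:ℝ)/2)) 2, ← Real.rpow_mul (by norm_num)]
            norm_num
          exact le_of_pow_le_pow_left₀ (by norm_num) (by norm_num) h
        have a4 : (1+t)^((3:ℝ)/2)/3 ≤ (1+t)^((3:ℝ)/2)/2^((3:ℝ)/2) := by
          apply div_le_div_of_nonneg_left (Real.rpow_nonneg h1t.le _) (by positivity) a3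
        linarith [a2 ▸ a1]
      have hnum : Real.log (2+s)^2 ≤ 81 * (1+t)^((1:ℝ)/4) := by
        have h9 : (1+s)^((1:ℝ)/4) ≤ (1+t)^((1:ℝ)/4) :=
          Real.rpow_le_rpow h1s.le (by linarith) (by norm_num)
        nlinarith
      have hden2 : 0 < (1+t)^((3:ℝ)/2)/3 * Real.sqrt (1+t-s) := by
        have := Real.sqrt_pos.mpr (show (0:ℝ) < 1+t-s by linarith)
        positivity
      have hstep : f s ≤ 81*(1+t)^((1:ℝ)/4) / ((1+t)^((3:ℝ)/2)/3 * Real.sqrt (1+t-s)) :=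
        div_le_div₀ (by positivity) hnum hden2
          (mul_le_mul_of_nonneg_right hpow (Real.sqrt_nonneg _))
      have heq : 81*(1+t)^((1:ℝ)/4) / ((1+t)^((3:ℝ)/2)/3 * Real.sqrt (1+t-s)) = g2 s := by
        simp only [hg2]
        have e1 : (1+t)^(-(5:ℝ)/4) = (1+t)^((1:ℝ)/4) / (1+t)^((3:ℝ)/2) := by
          rw [← Real.rpow_sub h1t]; norm_num
        have e2 : (1+t-s)^(-(1:ℝ)/2) = ((1+t-s)^((1:ℝ)/2))⁻¹ := by
          rw [show (-(1:ℝ)/2) = -((1:ℝ)/2) by ring, Real.rpow_neg (by linarith)]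
        rw [e1, e2, Real.sqrt_eq_rpow]
        have hne1 : (1+t)^((3:ℝ)/2) ≠ 0 := (Real.rpow_pos_of_pos h1t _).ne'
        have hne2 : (1+t-s)^((1:ℝ)/2) ≠ 0 := (Real.rpow_pos_of_pos (by linarith) _).ne'
        field_simp
        ring
      calc f s ≤ 81*(1+t)^((1:ℝ)/4) / ((1+t)^((3:ℝ)/2)/3 * Real.sqrt (1+t-s)) := hstep
        _ = g2 s := heq
        _ ≤ g1 s + g2 s := le_add_of_nonneg_left hg1nn
  have hmono := intervalIntegral.integral_mono_on ht hfi (hg1i.add hg2i) hpt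
  rw [intervalIntegral.integral_add hg1i hg2i] at hmono
  have hI1 : (∫ s in (0:ℝ)..t, g1 s) ≤ 648 / Real.sqrt (1+t) := by
    have e0 : (∫ s in (0:ℝ)..t, g1 s)
        = (∫ s in (0:ℝ)..t, 162 * (1+s) ^ (-(5:ℝ)/4)) / Real.sqrt (1+t) := by
      simp only [hg1]
      exact intervalIntegral.integral_div _ _
    have e1 : (∫ s in (0:ℝ)..t, 162 * (1+s) ^ (-(5:ℝ)/4))
        = 162 * ∫ s in (0:ℝ)..t, (1+s) ^ (-(5:ℝ)/4) :=
      intervalIntegral.integral_const_mul _ _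
    have e2 : (∫ s in (0:ℝ)..t, (1+s) ^ (-(5:ℝ)/4))
        = ∫ x in (1:ℝ)..(1+t), x ^ (-(5:ℝ)/4) := by
      rw [intervalIntegral.integral_comp_add_left (fun x => x ^ (-(5:ℝ)/4)) 1]
      norm_num
    have e3 : (∫ x in (1:ℝ)..(1+t), x ^ (-(5:ℝ)/4))
        = ((1+t) ^ (-(5:ℝ)/4 + 1) - 1 ^ (-(5:ℝ)/4 + 1)) / (-(5:ℝ)/4 + 1) := by
      apply integral_rpow
      right
      constructor
      · norm_num
      · rw [Set.uIcc_of_le (by linarith)]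
        intro h
        have := (Set.mem_Icc.mp h).1
        linarith
    have hle : (∫ x in (1:ℝ)..(1+t), x ^ (-(5:ℝ)/4)) ≤ 4 := by
      rw [e3]
      rw [Real.one_rpow, show (-(5:ℝ)/4 + 1) = -((1:ℝ)/4) by norm_num]
      have := Real.rpow_nonneg h1t.le (-((1:ℝ)/4))
      linarith
    rw [e0, e1]
    apply div_le_div_of_nonneg_right ?_ hst.le
    linarith
  have hI2 : (∫ s in (0:ℝ)..t, g2 s) ≤ 486 / Real.sqrt (1+t) := by
    have e1 : (∫ s in (0:ℝ)..t, g2 s)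
        = 243 * (1+t) ^ (-(5:ℝ)/4) * ∫ s in (0:ℝ)..t, (1+t-s) ^ (-(1:ℝ)/2) := by
      simp only [hg2]
      exact intervalIntegral.integral_const_mul _ _
    have e2 : (∫ s in (0:ℝ)..t, (1+t-s) ^ (-(1:ℝ)/2))
        = ∫ x in (1:ℝ)..(1+t), x ^ (-(1:ℝ)/2) := by
      rw [intervalIntegral.integral_comp_sub_left (fun x => x ^ (-(1:ℝ)/2)) (1+t)]
      norm_num
    have e3 : (∫ x in (1:ℝ)..(1+t), x ^ (-(1:ℝ)/2))
        = ((1+t) ^ (-(1:ℝ)/2 + 1) - 1 ^ (-(1:ℝ)/2 + 1)) / (-(1:ℝ)/2 + 1) := by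
      apply integral_rpow
      left; norm_num
    have hle : (∫ x in (1:ℝ)..(1+t), x ^ (-(1:ℝ)/2)) ≤ 2 * (1+t) ^ ((1:ℝ)/2) := by
      rw [e3, Real.one_rpow]
      have h12 : (-(1:ℝ)/2 + 1) = (1:ℝ)/2 := by norm_num
      rw [h12]
      have := Real.rpow_nonneg h1t.le ((1:ℝ)/2)
      nlinarith
    have hconst : (0:ℝ) ≤ 243 * (1+t) ^ (-(5:ℝ)/4) :=
      mul_nonneg (by norm_num) (Real.rpow_nonneg h1t.le _)
    have hfinal : 243 * (1+t) ^ (-(5:ℝ)/4) * (2 * (1+t) ^ ((1:ℝ)/2))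
        ≤ 486 / Real.sqrt (1+t) := by
      have ecomb : (1+t) ^ (-(5:ℝ)/4) * (1+t) ^ ((1:ℝ)/2) = (1+t) ^ (-(3:ℝ)/4) := by
        rw [← Real.rpow_add h1t]; norm_num
      have hmono2 : (1+t) ^ (-(3:ℝ)/4) ≤ (1+t) ^ (-(1:ℝ)/2) :=
        Real.rpow_le_rpow_of_exponent_le (by linarith) (by norm_num)
      have einv : (1+t) ^ (-(1:ℝ)/2) = 1 / Real.sqrt (1+t) := by
        rw [show (-(1:ℝ)/2) = -((1:ℝ)/2) by ring, Real.rpow_neg h1t.le,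
          ← Real.sqrt_eq_rpow]
        exact inv_eq_one_div _
      calc 243 * (1+t) ^ (-(5:ℝ)/4) * (2 * (1+t) ^ ((1:ℝ)/2))
          = 486 * ((1+t) ^ (-(5:ℝ)/4) * (1+t) ^ ((1:ℝ)/2)) := by ring
        _ = 486 * (1+t) ^ (-(3:ℝ)/4) := by rw [ecomb]
        _ ≤ 486 * (1+t) ^ (-(1:ℝ)/2) := by nlinarith
        _ = 486 / Real.sqrt (1+t) := by rw [einv]; ring
    calc (∫ s in (0:ℝ)..t, g2 s)
        = 243 * (1+t) ^ (-(5:ℝ)/4) * ∫ s in (0:ℝ)..t, (1+t-s) ^ (-(1:ℝ)/2) := e1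
      _ ≤ 243 * (1+t) ^ (-(5:ℝ)/4) * (2 * (1+t) ^ ((1:ℝ)/2)) := by
          apply mul_le_mul_of_nonneg_left _ hconst
          rw [e2]; exact hle
      _ ≤ 486 / Real.sqrt (1+t) := hfinal
  have hsum : (648:ℝ) / Real.sqrt (1+t) + 486 / Real.sqrt (1+t) ≤ 2048 / Real.sqrt (1+t) := by
    rw [← add_div]
    exact div_le_div_of_nonneg_right (by norm_num) hst.le
  linarith

theorem convolution_time_estimate_logsq :
    ∃ C > (0 : ℝ), ∀ t : ℝ, 0 ≤ t →
      (∫ s in (0:ℝ)..t,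
          (Real.log (2 + s)) ^ 2 / ((1 + s) ^ ((3 : ℝ) / 2) * Real.sqrt (1 + t - s))) ≤
        C / Real.sqrt (1 + t) := by
  exact ⟨2048, by norm_num, conv_est'⟩
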